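/- (Non-strict Schur complement) Let Q ∈ ℍ^m, R ∈ ℍ^n, S ∈ ℂ^{m×n}. The block matrix [[Q, S],[Sᴴ, R]] ⪰ 0 if and only if R ⪰ 0, Q - S R⁺ Sᴴ ⪰ 0, and S(I − R R⁺) = 0, where R⁺ is the Moore–Penrose pseudoinverse of R. -/

import Mathlib

open Matrix
open scoped ComplexOrder

section Aux

variable {n : ℕ} {R Rp : Matrix (Fin n) (Fin n) ℂ}

lemma aux_comm (hR : R.IsHermitian)
    (h1 : R * Rp * R = R) (h2 : Rp * R * Rp = Rp)
    (h3 : (R * Rp)ᴴ = R * Rp) (h4 : (Rp * R)ᴴ = Rp * R) :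
    R * Rp = Rp * R := by
  have c1 : R * Rpᴴ = Rp * R := by
    calc R * Rpᴴ = Rᴴ * Rpᴴ := by rw [hR.eq]
      _ = (Rp * R)ᴴ := (conjTranspose_mul _ _).symm
      _ = Rp * R := h4
  have c2 : Rpᴴ * R = R * Rp := by
    calc Rpᴴ * R = Rpᴴ * Rᴴ := by rw [hR.eq]
      _ = (R * Rp)ᴴ := (conjTranspose_mul _ _).symm
      _ = R * Rp := h3
  have h1' : R * Rpᴴ * R = R := by
    have := congrArg conjTranspose h1
    simp only [conjTranspose_mul, hR.eq, ← mul_assoc] at this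
    exact this
  calc R * Rp = (R * Rpᴴ * R) * Rp := by rw [h1']
    _ = (R * Rpᴴ) * (R * Rp) := by rw [mul_assoc]
    _ = (Rp * R) * (Rpᴴ * R) := by rw [c1, ← c2]
    _ = Rp * (R * Rpᴴ * R) := by rw [mul_assoc Rp R, ← mul_assoc R Rpᴴ R]
    _ = Rp * R := by rw [h1']

lemma aux_herm (hR : R.IsHermitian)
    (h1 : R * Rp * R = R) (h2 : Rp * R * Rp = Rp)
    (h3 : (R * Rp)ᴴ = R * Rp) (h4 : (Rp * R)ᴴ = Rp * R) :
    Rpᴴ = Rp := by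
  have hcomm := aux_comm hR h1 h2 h3 h4
  have c1 : R * Rpᴴ = Rp * R := by
    calc R * Rpᴴ = Rᴴ * Rpᴴ := by rw [hR.eq]
      _ = (Rp * R)ᴴ := (conjTranspose_mul _ _).symm
      _ = Rp * R := h4
  have c2 : Rpᴴ * R = R * Rp := by
    calc Rpᴴ * R = Rpᴴ * Rᴴ := by rw [hR.eq]
      _ = (R * Rp)ᴴ := (conjTranspose_mul _ _).symm
      _ = R * Rp := h3
  have h2' : Rpᴴ * R * Rpᴴ = Rpᴴ := by
    have := congrArg conjTranspose h2
    simp only [conjTranspose_mul, hR.eq, ← mul_assoc] at this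
    exact this
  calc Rpᴴ = Rpᴴ * R * Rpᴴ := h2'.symm
    _ = (R * Rp) * Rpᴴ := by rw [c2]
    _ = (Rp * R) * Rpᴴ := by rw [hcomm]
    _ = Rp * (R * Rpᴴ) := by rw [mul_assoc]
    _ = Rp * (Rp * R) := by rw [c1]
    _ = Rp * (R * Rp) := by rw [← hcomm]
    _ = Rp := by rw [← mul_assoc, h2]

open scoped MatrixOrder Matrix.Norms.L2Operator in
lemma aux_psd_factor {ι : Type*} [Fintype ι] [DecidableEq ι] {A : Matrix ι ι ℂ}
    (hA : A.PosSemidef) : ∃ B : Matrix ι ι ℂ, A = Bᴴ * B := by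
  obtain ⟨B, hB⟩ := CStarAlgebra.nonneg_iff_eq_star_mul_self.mp hA.nonneg
  exact ⟨B, hB⟩

end Aux

/-- Non-strict Schur complement: `[[Q, S],[Sᴴ, R]] ⪰ 0` iff `R ⪰ 0`,
`Q - S R⁺ Sᴴ ⪰ 0` and `S(I - R R⁺) = 0`, where `R⁺` is the Moore–Penrose
pseudoinverse of `R` (characterized by the four Penrose conditions). -/
theorem stmt13 {m n : ℕ}
    (Q : Matrix (Fin m) (Fin m) ℂ) (hQ : Q.IsHermitian)
    (R : Matrix (Fin n) (Fin n) ℂ) (hR : R.IsHermitian)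
    (S : Matrix (Fin m) (Fin n) ℂ)
    (Rp : Matrix (Fin n) (Fin n) ℂ)
    (h1 : R * Rp * R = R) (h2 : Rp * R * Rp = Rp)
    (h3 : (R * Rp)ᴴ = R * Rp) (h4 : (Rp * R)ᴴ = Rp * R) :
    (fromBlocks Q S Sᴴ R).PosSemidef ↔
      (R.PosSemidef ∧ (Q - S * Rp * Sᴴ).PosSemidef ∧
        S * (1 - R * Rp) = 0) := by
  have hcomm := aux_comm hR h1 h2 h3 h4
  have hRpH := aux_herm hR h1 h2 h3 h4
  set M : Matrix (Fin m ⊕ Fin n) (Fin m ⊕ Fin n) ℂ := fromBlocks Q S Sᴴ R with hMdef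
  constructor
  · intro hM
    obtain ⟨B, hB⟩ := aux_psd_factor hM
    have hRK : R * (1 - R * Rp) = 0 := by
      rw [mul_sub, mul_one, hcomm, ← mul_assoc, h1, sub_self]
    refine ⟨?_, ?_, ?_⟩
    · -- R PSD
      have key : (fromRows (0 : Matrix (Fin m) (Fin n) ℂ) (1 : Matrix (Fin n) (Fin n) ℂ))ᴴ
          * M * (fromRows 0 1 : Matrix (Fin m ⊕ Fin n) (Fin n) ℂ) = R := by
        rw [Matrix.mul_assoc, hMdef, fromBlocks_mul_fromRows,
          conjTranspose_fromRows_eq_fromCols_conjTranspose, fromCols_mul_fromRows]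
        simp
      exact key ▸ hM.conjTranspose_mul_mul_same _
    · -- Schur complement PSD
      have key : (fromRows (1 : Matrix (Fin m) (Fin m) ℂ) (-(Rp * Sᴴ)))ᴴ
          * M * (fromRows 1 (-(Rp * Sᴴ)) : Matrix (Fin m ⊕ Fin n) (Fin m) ℂ) = Q - S * Rp * Sᴴ := by
        rw [Matrix.mul_assoc, hMdef, fromBlocks_mul_fromRows,
          conjTranspose_fromRows_eq_fromCols_conjTranspose, fromCols_mul_fromRows]
        have h2' : Rp * (R * (Rp * Sᴴ)) = Rp * Sᴴ := by
          rw [← Matrix.mul_assoc, ← Matrix.mul_assoc, h2]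
        rw [conjTranspose_one, Matrix.one_mul, Matrix.mul_one, Matrix.mul_one,
          conjTranspose_neg, conjTranspose_mul, conjTranspose_conjTranspose, hRpH,
          Matrix.mul_neg S, Matrix.mul_neg R, Matrix.neg_mul, Matrix.mul_add,
          Matrix.mul_neg, Matrix.mul_assoc S Rp (R * (Rp * Sᴴ)), h2',
          Matrix.mul_assoc S Rp Sᴴ]
        abel
      exact key ▸ hM.conjTranspose_mul_mul_same _
    · -- S (1 - R Rp) = 0
      set X : Matrix (Fin m ⊕ Fin n) (Fin n) ℂ := fromRows 0 (1 - R * Rp) with hXdef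
      have hMX2 : M * X = fromRows (S * (1 - R * Rp)) 0 := by
        rw [hMdef, hXdef, fromBlocks_mul_fromRows, hRK]
        simp
      have hXMX : Xᴴ * (M * X) = 0 := by
        rw [hMX2, hXdef, conjTranspose_fromRows_eq_fromCols_conjTranspose,
          fromCols_mul_fromRows]
        simp
      have hBX : B * X = 0 := by
        have h0 : (B * X)ᴴ * (B * X) = 0 := by
          rw [conjTranspose_mul, Matrix.mul_assoc, ← Matrix.mul_assoc Bᴴ B X, ← hB, hXMX]
        exact conjTranspose_mul_self_eq_zero.mp h0
      have hMX : M * X = 0 := by rw [hB, Matrix.mul_assoc, hBX, Matrix.mul_zero]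
      have : fromCols (1 : Matrix (Fin m) (Fin m) ℂ) (0 : Matrix (Fin m) (Fin n) ℂ)
          * (M * X) = S * (1 - R * Rp) := by
        rw [hMX2, fromCols_mul_fromRows]; simp
      rw [hMX, Matrix.mul_zero] at this
      exact this.symm
  · rintro ⟨hRpsd, hschur, hS0⟩
    have hS : S * (R * Rp) = S := by
      rw [Matrix.mul_sub, Matrix.mul_one, sub_eq_zero] at hS0
      exact hS0.symm
    have i1 : S * Rp * R = S := by
      rw [Matrix.mul_assoc, ← hcomm, hS]
    have i2 : R * (Rp * Sᴴ) = Sᴴ := by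
      have := congrArg conjTranspose i1
      simpa only [conjTranspose_mul, hR.eq, hRpH, Matrix.mul_assoc] using this
    obtain ⟨A, hA⟩ := aux_psd_factor hschur
    obtain ⟨Bn, hBn⟩ := aux_psd_factor hRpsd
    have hD : (fromBlocks (Q - S * Rp * Sᴴ) 0 0 R).PosSemidef := by
      have hfac : fromBlocks (Q - S * Rp * Sᴴ) (0 : Matrix (Fin m) (Fin n) ℂ)
          (0 : Matrix (Fin n) (Fin m) ℂ) R
          = (fromBlocks A 0 0 Bn)ᴴ * (fromBlocks A 0 0 Bn) := by
        rw [fromBlocks_conjTranspose, fromBlocks_multiply]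
        simp [← hA, ← hBn]
      rw [hfac]
      exact posSemidef_conjTranspose_mul_self _
    have hLD : (fromBlocks 1 (S * Rp) 0 1) * (fromBlocks (Q - S * Rp * Sᴴ) 0 0 R)
        * (fromBlocks 1 (S * Rp) 0 1)ᴴ = M := by
      rw [fromBlocks_conjTranspose, fromBlocks_multiply, fromBlocks_multiply, hMdef]
      have i1' : S * (Rp * R) = S := by rw [← Matrix.mul_assoc]; exact i1
      have h2' : Rp * (R * (Rp * Sᴴ)) = Rp * Sᴴ := by
        rw [← Matrix.mul_assoc, ← Matrix.mul_assoc, h2]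
      simp only [Matrix.one_mul, Matrix.mul_one, Matrix.mul_zero, Matrix.zero_mul,
        add_zero, zero_add, conjTranspose_one, conjTranspose_zero, conjTranspose_mul,
        hRpH, Matrix.mul_assoc, i1', i2, h2']
      rw [sub_add_cancel]
    exact hLD ▸ hD.mul_mul_conjTranspose_same _
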